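/- Let σ and τ be protagonist strategies in an initialized generalised safety/reachability game and let h be a history. If h is not a witness of non-admissibility of σ, and h is not a witness of non-dominance of σ by τ, then h is not a witness of non-dominance of τ by σ. -/

import Mathlib

open scoped Classical

/-- A generalised safety/reachability game: a finite directed graph where every vertex has a
successor, a set `protag` of protagonist vertices (the rest belong to the antagonist), a set
`leaf` of leaves (each equipped with exactly a self-loop), an integer payoff attached to each
leaf, and an initial vertex `v0`. -/
structure GSRGame where
  V : Type
  fin : Finite V
  E : V → V → Prop
  succ_exists : ∀ v : V, ∃ w : V, E v w
  protag : V → Prop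
  leaf : V → Prop
  leaf_loop : ∀ v w : V, leaf v → (E v w ↔ w = v)
  pay : V → ℤ
  v0 : V

namespace GSRGame

variable (g : GSRGame)

/-- A strategy: to each nonempty history it assigns a successor of the last vertex.
(A protagonist strategy is only ever consulted at histories ending in a protagonist vertex,
an antagonist strategy at histories ending in an antagonist vertex.) -/
structure Strat where
  act : List g.V → g.V
  valid : ∀ (h : List g.V) (hne : h ≠ []), g.E (h.getLast hne) (act h)

/-- One step of the play extending history `h`: the protagonist moves according to `σ` at
protagonist vertices, the antagonist according to `τ` elsewhere. -/
noncomputable def step (σ τ : g.Strat) (h : List g.V) : List g.V :=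
  h ++ [if g.protag (h.getLastD g.v0) then σ.act h else τ.act h]

/-- The history obtained after `k` steps of play by `(σ, τ)` extending `h`. -/
noncomputable def playList (σ τ : g.Strat) (h : List g.V) : ℕ → List g.V
  | 0 => h
  | k + 1 => g.step σ τ (playList σ τ h k)

/-- The outcome (infinite path) induced by `(σ, τ)` from the history `h`. -/
noncomputable def play (σ τ : g.Strat) (h : List g.V) (k : ℕ) : g.V :=
  (g.playList σ τ h k).getLastD g.v0

/-- The payoff of an outcome: the payoff of the leaf it reaches, and `0` if it reaches
no leaf. -/
noncomputable def payoffOf (ρ : ℕ → g.V) : ℤ :=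
  if hx : ∃ k : ℕ, g.leaf (ρ k) then g.pay (ρ (Nat.find hx)) else 0

/-- The payoff `p(h, σ, τ)` of the outcome induced by `(σ, τ)` from the history `h`. -/
noncomputable def pval (σ τ : g.Strat) (h : List g.V) : ℤ :=
  g.payoffOf (g.play σ τ h)

/-- `h` is a history (a nonempty path starting at `v0`) compatible with the protagonist
strategy `σ`: every protagonist move along `h` agrees with `σ`. -/
def Compat (σ : g.Strat) (h : List g.V) : Prop :=
  h ≠ [] ∧ h.head? = some g.v0 ∧ List.Chain' g.E h ∧
    ∀ (p : List g.V) (v : g.V), (p ++ [v]) <+: h → p ≠ [] →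
      g.protag (p.getLastD g.v0) → σ.act p = v

/-- The cooperative value `cVal(h, σ)`. -/
noncomputable def cVal (σ : g.Strat) (h : List g.V) : ℤ :=
  sSup {z : ℤ | ∃ τ : g.Strat, z = g.pval σ τ h}

/-- The antagonistic value `aVal(h, σ)`. -/
noncomputable def aVal (σ : g.Strat) (h : List g.V) : ℤ :=
  sInf {z : ℤ | ∃ τ : g.Strat, z = g.pval σ τ h}

/-- The antagonistic value `aVal(h)` of a history. -/
noncomputable def aValH (h : List g.V) : ℤ :=
  sSup {z : ℤ | ∃ σ : g.Strat, z = g.aVal σ h}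

/-- The antagonistic-cooperative value `acVal(h)` of a history. -/
noncomputable def acVal (h : List g.V) : ℤ :=
  sSup {z : ℤ | ∃ σ : g.Strat, g.aValH h ≤ g.aVal σ h ∧ z = g.cVal σ h}

/-- Weak dominance `σ ⪯ σ'` (from the initial vertex `v0`). -/
def Dom (σ σ' : g.Strat) : Prop :=
  ∀ τ : g.Strat, g.pval σ τ [g.v0] ≤ g.pval σ' τ [g.v0]

/-- Dominance `σ ≺ σ'`. -/
def SDom (σ σ' : g.Strat) : Prop :=
  g.Dom σ σ' ∧ ∃ τ : g.Strat, g.pval σ τ [g.v0] < g.pval σ' τ [g.v0]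

/-- Admissibility: `σ` is dominated by no strategy. -/
def Admissible (σ : g.Strat) : Prop := ¬ ∃ σ' : g.Strat, g.SDom σ σ'

/-- `h` is a witness of non-dominance of `σ₁` by `σ₂`. -/
def NonDomWitness (σ₁ σ₂ : g.Strat) (h : List g.V) : Prop :=
  g.Compat σ₁ h ∧ g.Compat σ₂ h ∧ g.protag (h.getLastD g.v0) ∧
    σ₁.act h ≠ σ₂.act h ∧ g.aVal σ₂ h < g.cVal σ₁ h

/-- `h` is a witness of non-admissibility of `σ`. -/
def NonAdmWitness (σ : g.Strat) (h : List g.V) : Prop :=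
  g.Compat σ h ∧
    g.aVal σ h ≤ g.cVal σ h ∧ g.cVal σ h ≤ g.aValH h ∧ g.aValH h ≤ g.acVal h ∧
    (g.aVal σ h < g.cVal σ h ∨ g.cVal σ h < g.aValH h ∨ g.aValH h < g.acVal h)

end GSRGame

namespace GSRGame

variable (g : GSRGame)

noncomputable def someStrat : g.Strat where
  act h := if hne : h ≠ [] then (g.succ_exists (h.getLast hne)).choose
           else (g.succ_exists g.v0).choose
  valid h hne := by
    rw [dif_pos hne]
    exact (g.succ_exists _).choose_spec

def paySet : Set ℤ := insert (0:ℤ) (Set.range g.pay)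

lemma paySet_finite : g.paySet.Finite := by
  have := g.fin
  exact (Set.finite_range g.pay).insert 0

lemma payoff_mem (ρ : ℕ → g.V) : g.payoffOf ρ ∈ g.paySet := by
  unfold payoffOf paySet
  split
  · exact Set.mem_insert_iff.2 (Or.inr ⟨_, rfl⟩)
  · exact Set.mem_insert _ _

lemma pvalSet_subset (σ : g.Strat) (h : List g.V) :
    {z : ℤ | ∃ τ : g.Strat, z = g.pval σ τ h} ⊆ g.paySet := by
  rintro z ⟨τ, rfl⟩; exact g.payoff_mem _

lemma pvalSet_nonempty (σ : g.Strat) (h : List g.V) :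
    {z : ℤ | ∃ τ : g.Strat, z = g.pval σ τ h}.Nonempty :=
  ⟨g.pval σ g.someStrat h, g.someStrat, rfl⟩

lemma pvalSet_finite (σ : g.Strat) (h : List g.V) :
    {z : ℤ | ∃ τ : g.Strat, z = g.pval σ τ h}.Finite :=
  g.paySet_finite.subset (g.pvalSet_subset σ h)

lemma aVal_mem (σ : g.Strat) (h : List g.V) :
    g.aVal σ h ∈ {z : ℤ | ∃ τ : g.Strat, z = g.pval σ τ h} :=
  (g.pvalSet_nonempty σ h).csInf_mem (g.pvalSet_finite σ h)

lemma cVal_mem (σ : g.Strat) (h : List g.V) :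
    g.cVal σ h ∈ {z : ℤ | ∃ τ : g.Strat, z = g.pval σ τ h} :=
  (g.pvalSet_nonempty σ h).csSup_mem (g.pvalSet_finite σ h)

lemma aVal_le_cVal (σ : g.Strat) (h : List g.V) : g.aVal σ h ≤ g.cVal σ h :=
  csInf_le_csSup (g.pvalSet_nonempty σ h) (g.pvalSet_finite σ h).bddBelow
    (g.pvalSet_finite σ h).bddAbove

lemma aValSet_subset (h : List g.V) :
    {z : ℤ | ∃ σ : g.Strat, z = g.aVal σ h} ⊆ g.paySet := by
  rintro z ⟨σ, rfl⟩
  exact g.pvalSet_subset σ h (g.aVal_mem σ h)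

lemma aValSet_finite (h : List g.V) :
    {z : ℤ | ∃ σ : g.Strat, z = g.aVal σ h}.Finite :=
  g.paySet_finite.subset (g.aValSet_subset h)

lemma aVal_le_aValH (σ : g.Strat) (h : List g.V) : g.aVal σ h ≤ g.aValH h :=
  le_csSup (g.aValSet_finite h).bddAbove ⟨σ, rfl⟩

lemma aValH_mem (h : List g.V) :
    g.aValH h ∈ {z : ℤ | ∃ σ : g.Strat, z = g.aVal σ h} :=
  Set.Nonempty.csSup_mem ⟨g.aVal g.someStrat h, g.someStrat, rfl⟩ (g.aValSet_finite h)

lemma acValSet_subset (h : List g.V) :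
    {z : ℤ | ∃ σ : g.Strat, g.aValH h ≤ g.aVal σ h ∧ z = g.cVal σ h} ⊆ g.paySet := by
  rintro z ⟨σ, -, rfl⟩
  exact g.pvalSet_subset σ h (g.cVal_mem σ h)

lemma acValSet_finite (h : List g.V) :
    {z : ℤ | ∃ σ : g.Strat, g.aValH h ≤ g.aVal σ h ∧ z = g.cVal σ h}.Finite :=
  g.paySet_finite.subset (g.acValSet_subset h)

lemma cVal_le_acVal (σ : g.Strat) (h : List g.V) (hσ : g.aValH h ≤ g.aVal σ h) :
    g.cVal σ h ≤ g.acVal h :=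
  le_csSup (g.acValSet_finite h).bddAbove ⟨σ, hσ, rfl⟩

lemma aValH_le_acVal (h : List g.V) : g.aValH h ≤ g.acVal h := by
  obtain ⟨σ, hσ⟩ := g.aValH_mem h
  calc g.aValH h ≤ g.cVal σ h := hσ.le.trans (g.aVal_le_cVal σ h)
    _ ≤ g.acVal h := g.cVal_le_acVal σ h hσ.le

end GSRGame

/-- if `h` is not a witness of non-admissibility of `σ` and not a witness of
non-dominance of `σ` by `τ`, then `h` is not a witness of non-dominance of `τ` by `σ`. -/
theorem stmt15 (g : GSRGame) (σ τ : g.Strat) (h : List g.V)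
    (h1 : ¬ g.NonAdmWitness σ h) (h2 : ¬ g.NonDomWitness σ τ h) :
    ¬ g.NonDomWitness τ σ h := by
  rintro ⟨cτ, cσ, prot, hne, hlt⟩
  have hca : g.cVal σ h ≤ g.aVal τ h := by
    by_contra hc
    exact h2 ⟨cσ, cτ, prot, fun e => hne e.symm, lt_of_not_ge hc⟩
  have a1 := g.aVal_le_cVal σ h
  have a2 : g.cVal σ h ≤ g.aValH h := hca.trans (g.aVal_le_aValH τ h)
  have a3 := g.aValH_le_acVal h
  have heq : ¬(g.aVal σ h < g.cVal σ h ∨ g.cVal σ h < g.aValH h ∨ g.aValH h < g.acVal h) :=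
    fun hd => h1 ⟨cσ, a1, a2, a3, hd⟩
  push_neg at heq
  obtain ⟨e1, e2, e3⟩ := heq
  have hτ : g.aValH h ≤ g.aVal τ h := e2.trans hca
  have hfin := g.cVal_le_acVal τ h hτ
  linarith
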